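/- Let B: ℂ⁺ → ℂ be analytic with Im B(z) ≥ 0 on the upper half-plane ℂ⁺, such that B extends analytically to ℂ ∖ [ε, ∞) for some ε > 0, is real on (−∞, ε), and B(0) = 0. Write B in Nevanlinna form B(z) = β + γz + ∫(1+zt)/(t−z) dρ(t) with β ∈ ℝ, γ ≥ 0, ρ a finite positive Borel measure. Then supp(ρ) ⊆ [ε, ∞), β = −∫ (1/t) dρ(t), and C(z) := zB(z) satisfies C(z) = z²(γ + ∫₀^∞ (t²+1)/(t(t−z)) dρ(t)); consequently C(z)/z² has positive imaginary part for z ∈ ℂ⁺ and positive real part for z in the left half-plane iℂ⁺. -/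

import Mathlib

open MeasureTheory Complex

namespace Stmt15
noncomputable def F (z : ℂ) (t : ℝ) : ℂ := (1 + z * t) / ((t : ℂ) - z)

lemma F_meas (z : ℂ) : Measurable (F z) :=
  (measurable_const.add (measurable_const.mul Complex.measurable_ofReal)).div
    (Complex.measurable_ofReal.sub measurable_const)

lemma F_eq (z : ℂ) (t : ℝ) (h : (t : ℂ) - z ≠ 0) :
    F z t = z + (1 + z ^ 2) / ((t : ℂ) - z) := by
  rw [F, eq_comm, add_div' _ _ _ h]; congr 1; ring

lemma F_norm_le {z : ℂ} {t : ℝ} {d : ℝ} (hd : 0 < d) (h : d ≤ ‖(t : ℂ) - z‖) :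
    ‖F z t‖ ≤ ‖z‖ + ‖1 + z ^ 2‖ / d := by
  have hne : (t : ℂ) - z ≠ 0 := by
    intro h0
    rw [h0] at h; simp at h; linarith
  rw [F_eq z t hne]
  refine (norm_add_le _ _).trans ?_
  gcongr
  rw [norm_div]
  exact div_le_div_of_nonneg_left (by positivity) hd h

lemma integrable_F {ρ : Measure ℝ} [IsFiniteMeasure ρ] {z : ℂ} {d : ℝ} (hd : 0 < d)
    (h : ∀ᵐ t ∂ρ, d ≤ ‖Complex.ofReal t - z‖) : Integrable (F z) ρ := by
  refine Integrable.mono' (integrable_const (‖z‖ + ‖1 + z ^ 2‖ / d))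
    (F_meas z).aestronglyMeasurable ?_
  exact h.mono fun t ht => F_norm_le hd ht

lemma F_im (x y t : ℝ) : (F (x + y * I) t).im = y * (1 + t ^ 2) / ((t - x) ^ 2 + y ^ 2) := by
  have hre : ((t : ℂ) - (x + y * I)).re = t - x := by simp
  have him : ((t : ℂ) - (x + y * I)).im = -y := by simp
  have h1 : ((1 : ℂ) + (x + y * I) * t).im = y * t := by simp
  have h2 : ((1 : ℂ) + (x + y * I) * t).re = 1 + x * t := by simp
  rw [F, Complex.div_im, Complex.normSq_apply, hre, him, h1, h2, div_sub_div_same]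
  rcases eq_or_ne ((t - x) * (t - x) + -y * -y) 0 with h0 | h0
  · have hy : y = 0 := by nlinarith [sq_nonneg (t-x), sq_nonneg y]
    have : (t - x) ^ 2 + y ^ 2 = 0 := by nlinarith [sq_nonneg (t-x), sq_nonneg y]
    rw [this, h0]
    simp [hy]
  · have he : (t - x) ^ 2 + y ^ 2 = (t - x) * (t - x) + -y * -y := by ring
    rw [he]
    congr 1
    ring

lemma upper_bound (ε : ℝ) (B : ℂ → ℂ)
    (hB : AnalyticOnNhd ℂ B {z : ℂ | z.im ≠ 0 ∨ z.re < ε})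
    (hreal : ∀ x : ℝ, x < ε → (B (x : ℂ)).im = 0)
    (a b : ℝ) (hab : a ≤ b) (hbε : b < ε) :
    ∃ C : ℝ, 0 ≤ C ∧ ∀ x ∈ Set.Icc a b, ∀ y ∈ Set.Ioc (0:ℝ) 1,
      (B (x + y * I)).im ≤ C * y := by
  set Ω : Set ℂ := {z : ℂ | z.im ≠ 0 ∨ z.re < ε} with hΩ
  set K : Set ℂ := {z : ℂ | z.re ∈ Set.Icc a b ∧ z.im ∈ Set.Icc 0 1} with hK
  have hKΩ : K ⊆ Ω := by
    rintro z ⟨hre, him⟩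
    rcases eq_or_lt_of_le him.1 with h | h
    · exact Or.inr (lt_of_le_of_lt hre.2 hbε)
    · exact Or.inl (ne_of_gt h)
  have hKconv : Convex ℝ K := by
    intro z hz w hw s t hs ht hst
    constructor
    · have := (convex_Icc a b) hz.1 hw.1 hs ht hst
      simpa using this
    · have := (convex_Icc (0:ℝ) 1) hz.2 hw.2 hs ht hst
      simpa using this
  have hKcomp : IsCompact K := by
    have hcl : IsClosed K :=
      ((isClosed_Icc.preimage Complex.continuous_re).inter
        (isClosed_Icc.preimage Complex.continuous_im))
    refine Metric.isCompact_of_isClosed_isBounded hcl ?_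
    rw [Metric.isBounded_iff_subset_closedBall 0]
    refine ⟨|a| + |b| + 1, ?_⟩
    rintro z ⟨hre, him⟩
    rw [Metric.mem_closedBall, dist_zero_right]
    have h0 := Complex.norm_le_abs_re_add_abs_im z
    have h1 : |z.re| ≤ |a| + |b| :=
      abs_le.2 ⟨by linarith [neg_abs_le a, hre.1, abs_nonneg b],
        by linarith [le_abs_self b, abs_nonneg a, hre.2]⟩
    have h2 : |z.im| ≤ 1 := abs_le.2 ⟨by linarith [him.1], him.2⟩
    calc ‖z‖ = ‖z‖ := rfl
      _ ≤ |z.re| + |z.im| := h0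
      _ ≤ |a| + |b| + 1 := by linarith
  have hderiv : ContinuousOn (deriv B) K :=
    ((hB.deriv).continuousOn).mono hKΩ
  obtain ⟨C, hC⟩ := hKcomp.exists_bound_of_continuousOn hderiv
  refine ⟨max C 0, le_max_right _ _, ?_⟩
  intro x hx y hy
  have hxK : (x : ℂ) ∈ K := by
    constructor <;> simp [hx.1, hx.2]
  have hzK : (x + y * I : ℂ) ∈ K := by
    constructor <;> simp [hx.1, hx.2, hy.1.le, hy.2]
  have hd : ∀ w ∈ K, HasDerivWithinAt B (deriv B w) K w := fun w hw =>
    ((hB w (hKΩ hw)).differentiableAt.hasDerivAt).hasDerivWithinAt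
  have hbound : ∀ w ∈ K, ‖deriv B w‖ ≤ max C 0 := fun w hw =>
    (hC w hw).trans (le_max_left _ _)
  have key := hKconv.norm_image_sub_le_of_norm_hasDerivWithin_le hd hbound hxK hzK
  have hnorm : ‖(x + y * I : ℂ) - x‖ = y := by
    have : (x + y * I : ℂ) - x = y * I := by ring
    rw [this]
    simp [_root_.abs_of_nonneg hy.1.le]
  rw [hnorm] at key
  have him0 : (B x).im = 0 := hreal x (lt_of_le_of_lt hx.2 hbε)
  have : (B (x + y * I)).im = (B (x + y * I) - B x).im := by
    simp [Complex.sub_im, him0]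
  rw [this]
  calc (B (x + y * I) - B x).im ≤ |(B (x + y * I) - B x).im| := le_abs_self _
    _ ≤ ‖B (x + y * I) - B x‖ := Complex.abs_im_le_norm _
    _ ≤ max C 0 * y := key
lemma measure_interval_le (β γ : ℝ) (hγ : 0 ≤ γ) (ρ : Measure ℝ) [IsFiniteMeasure ρ]
    (B : ℂ → ℂ)
    (hrep : ∀ z : ℂ, 0 < z.im → B z = (β : ℂ) + (γ : ℂ) * z + ∫ t : ℝ, F z t ∂ρ)
    (x y : ℝ) (hy : 0 < y) :
    (ρ (Set.Icc (x - y) (x + y))).toReal ≤ 2 * y * (B (x + y * I)).im := by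
  set z : ℂ := x + y * I with hz
  have hzim : z.im = y := by simp [hz]
  have hint : Integrable (F z) ρ := by
    refine integrable_F hy (ae_of_all _ fun t => ?_)
    calc y = |((t : ℂ) - z).im| := by simp [hz, abs_of_pos hy]
      _ ≤ ‖(t : ℂ) - z‖ := Complex.abs_im_le_norm _
  have hB := hrep z (by rw [hzim]; exact hy)
  have him : (B z).im = γ * y + ∫ t : ℝ, (F z t).im ∂ρ := by
    have hiim : (∫ t : ℝ, F z t ∂ρ).im = ∫ t : ℝ, (F z t).im ∂ρ := by
      simpa using (integral_im hint).symm
    rw [hB, Complex.add_im, Complex.add_im, hiim, Complex.ofReal_im]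
    have : (↑γ * z).im = γ * y := by simp [hz]
    rw [this]
    ring
  have hnn : 0 ≤ᵐ[ρ] fun t => (F z t).im := ae_of_all _ fun t => by
    show (0:ℝ) ≤ (F (↑x + ↑y * I) t).im
    rw [F_im]; positivity
  have hlow : ∀ t ∈ Set.Icc (x - y) (x + y), 1 / (2 * y) ≤ (F z t).im := by
    intro t ht
    rw [hz, F_im, div_le_div_iff₀ (by positivity) (by positivity)]
    have h1 : (t - x) ^ 2 ≤ y ^ 2 := sq_le_sq' (by linarith [ht.1]) (by linarith [ht.2])
    nlinarith [sq_nonneg t, sq_nonneg (t*y)]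
  have hs1 : 1 / (2 * y) * (ρ (Set.Icc (x - y) (x + y))).toReal
      ≤ ∫ t in Set.Icc (x - y) (x + y), (F z t).im ∂ρ :=
    setIntegral_ge_of_const_le_real measurableSet_Icc (measure_ne_top ρ _) hlow
      hint.im.integrableOn
  have hs2 : ∫ t in Set.Icc (x - y) (x + y), (F z t).im ∂ρ ≤ ∫ t : ℝ, (F z t).im ∂ρ :=
    setIntegral_le_integral hint.im hnn
  have hfin : ∫ t : ℝ, (F z t).im ∂ρ ≤ (B z).im := by
    rw [him]; nlinarith
  have h := hs1.trans (hs2.trans hfin)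
  have h2y : (0:ℝ) < 2 * y := by linarith
  calc (ρ (Set.Icc (x - y) (x + y))).toReal
      = 2 * y * (1 / (2 * y) * (ρ (Set.Icc (x - y) (x + y))).toReal) := by
        field_simp
    _ ≤ 2 * y * (B z).im := by
        apply mul_le_mul_of_nonneg_left h h2y.le

lemma icc_null (ε : ℝ) (B : ℂ → ℂ)
    (hB : AnalyticOnNhd ℂ B {z : ℂ | z.im ≠ 0 ∨ z.re < ε})
    (hreal : ∀ x : ℝ, x < ε → (B (x : ℂ)).im = 0)
    (β γ : ℝ) (hγ : 0 ≤ γ) (ρ : Measure ℝ) [IsFiniteMeasure ρ]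
    (hrep : ∀ z : ℂ, 0 < z.im → B z = (β : ℂ) + (γ : ℂ) * z + ∫ t : ℝ, F z t ∂ρ)
    (a b : ℝ) (hab : a < b) (hbε : b < ε) : ρ (Set.Icc a b) = 0 := by
  obtain ⟨C, hC0, hC⟩ := upper_bound ε B hB hreal a b hab.le hbε
  -- key per-interval estimate
  have key : ∀ x ∈ Set.Icc a b, ∀ y ∈ Set.Ioc (0:ℝ) 1,
      (ρ (Set.Icc (x - y) (x + y))).toReal ≤ 2 * C * y ^ 2 := by
    intro x hx y hy
    have h1 := measure_interval_le β γ hγ ρ B hrep x y hy.1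
    have h2 := hC x hx y hy
    calc (ρ (Set.Icc (x - y) (x + y))).toReal ≤ 2 * y * (B (x + y * I)).im := h1
      _ ≤ 2 * y * (C * y) := by nlinarith [hy.1]
      _ = 2 * C * y ^ 2 := by ring
  -- covering estimate for each N
  have main : ∀ N : ℕ, 1 ≤ N → (b - a) / (2 * N) ≤ 1 →
      (ρ (Set.Icc a b)).toReal ≤ C * (b - a) ^ 2 / 2 / N := by
    intro N hN1 hNy
    have hN0 : (0:ℝ) < N := by exact_mod_cast hN1
    set y : ℝ := (b - a) / (2 * N) with hydef
    have hy : 0 < y := by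
      apply div_pos (by linarith) (by positivity)
    have h2Ny : 2 * (N:ℝ) * y = b - a := by
      rw [hydef]; field_simp
    have hcov : Set.Icc a b ⊆
        ⋃ k ∈ Finset.range N, Set.Icc ((a + (2*k+1)*y) - y) ((a + (2*k+1)*y) + y) := by
      intro t ht
      set k0 : ℕ := ⌊(t - a) / (2 * y)⌋₊ with hk0
      set k : ℕ := min (N - 1) k0 with hk
      have hkN : k < N := by
        have : k ≤ N - 1 := min_le_left _ _
        omega
      refine Set.mem_biUnion (Finset.mem_range.2 hkN) ?_
      have hkk0 : (k:ℝ) ≤ (t - a) / (2 * y) := by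
        have h1 : (k:ℝ) ≤ (k0:ℝ) := by exact_mod_cast min_le_right (N-1) k0
        exact h1.trans (Nat.floor_le (div_nonneg (by linarith [ht.1]) (by positivity)))
      constructor
      · have : (k:ℝ) * (2 * y) ≤ t - a := (le_div_iff₀ (by positivity)).mp hkk0
        have heq : (a + (2*k+1)*y) - y = a + (k:ℝ) * (2*y) := by push_cast; ring
        rw [heq]; linarith
      · rcases le_or_gt k0 (N - 1) with hcase | hcase
        · have hkeq : k = k0 := by omega
          have h2 : (t - a) / (2 * y) < (k0:ℝ) + 1 := Nat.lt_floor_add_one _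
          have h3 : t - a < ((k0:ℝ) + 1) * (2 * y) := (div_lt_iff₀ (by positivity)).mp h2
          have heq : (a + (2*k+1)*y) + y = a + ((k:ℝ) + 1) * (2*y) := by push_cast; ring
          rw [heq, hkeq]; linarith
        · have hkeq : k = N - 1 := by omega
          have hcast : ((k:ℝ)) = (N:ℝ) - 1 := by
            rw [hkeq]; push_cast [Nat.cast_sub hN1]; ring
          have heq : (a + (2*k+1)*y) + y = a + 2 * (N:ℝ) * y + (2*(k:ℝ) + 2 - 2*(N:ℝ)) * y := by
            push_cast; ring
          rw [heq, h2Ny, hcast]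
          have : (2 * ((N:ℝ) - 1) + 2 - 2 * N) = 0 := by ring
          rw [this, zero_mul, add_zero]
          linarith [ht.2]
    have hsum : ρ (Set.Icc a b) ≤
        ∑ k ∈ Finset.range N, ρ (Set.Icc ((a + (2*k+1)*y) - y) ((a + (2*k+1)*y) + y)) :=
      (measure_mono hcov).trans (measure_biUnion_finset_le _ _)
    have hterm : ∀ k ∈ Finset.range N,
        ρ (Set.Icc ((a + (2*k+1)*y) - y) ((a + (2*k+1)*y) + y)) ≤ ENNReal.ofReal (2 * C * y ^ 2) := by
      intro k hk
      rw [Finset.mem_range] at hk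
      have hxmem : a + (2*k+1)*y ∈ Set.Icc a b := by
        constructor
        · nlinarith [hy.le, (Nat.cast_nonneg k : (0:ℝ) ≤ k)]
        · have hkle : (k:ℝ) ≤ (N:ℝ) - 1 := by
            have : (k:ℝ) + 1 ≤ N := by exact_mod_cast hk
            linarith
          nlinarith
      have := key _ hxmem y ⟨hy, hNy⟩
      rw [ENNReal.le_ofReal_iff_toReal_le (measure_ne_top ρ _) (by positivity)]
      exact this
    have hsum2 : ρ (Set.Icc a b) ≤ (N : ENNReal) * ENNReal.ofReal (2 * C * y ^ 2) := by
      refine hsum.trans ?_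
      calc ∑ k ∈ Finset.range N, ρ (Set.Icc ((a + (2*k+1)*y) - y) ((a + (2*k+1)*y) + y))
          ≤ ∑ _k ∈ Finset.range N, ENNReal.ofReal (2 * C * y ^ 2) := Finset.sum_le_sum hterm
        _ = (N : ENNReal) * ENNReal.ofReal (2 * C * y ^ 2) := by
            rw [Finset.sum_const, Finset.card_range]; simp [nsmul_eq_mul]
    have hR : ((N : ENNReal) * ENNReal.ofReal (2 * C * y ^ 2)) ≠ ⊤ := by
      exact ENNReal.mul_ne_top (by simp) ENNReal.ofReal_ne_top
    have := ENNReal.toReal_mono hR hsum2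
    rw [ENNReal.toReal_mul, ENNReal.toReal_ofReal (by positivity)] at this
    simp only [ENNReal.toReal_natCast] at this
    calc (ρ (Set.Icc a b)).toReal ≤ (N:ℝ) * (2 * C * y ^ 2) := this
      _ = C * (b - a) ^ 2 / 2 / N := by
          rw [hydef]; field_simp
  -- take the limit
  have htends : Filter.Tendsto (fun N : ℕ => C * (b - a) ^ 2 / 2 / N) Filter.atTop (nhds 0) :=
    tendsto_const_div_atTop_nhds_zero_nat _
  have hev : ∀ᶠ N : ℕ in Filter.atTop, (ρ (Set.Icc a b)).toReal ≤ C * (b - a) ^ 2 / 2 / N := by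
    filter_upwards [Filter.eventually_ge_atTop (max 1 ⌈(b - a) / 2⌉₊)] with N hN
    have h1 : 1 ≤ N := le_trans (le_max_left _ _) hN
    have h2 : (b - a) / (2 * N) ≤ 1 := by
      have hN0 : (0:ℝ) < N := by exact_mod_cast h1
      rw [div_le_one (by positivity)]
      have : ((b - a) / 2 : ℝ) ≤ ⌈(b - a) / 2⌉₊ := Nat.le_ceil _
      have h3 : (⌈(b - a) / 2⌉₊ : ℝ) ≤ N := by exact_mod_cast le_trans (le_max_right _ _) hN
      linarith
    exact main N h1 h2
  have hle0 : (ρ (Set.Icc a b)).toReal ≤ 0 := ge_of_tendsto htends hev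
  have : (ρ (Set.Icc a b)).toReal = 0 := le_antisymm hle0 ENNReal.toReal_nonneg
  rwa [ENNReal.toReal_eq_zero_iff, or_iff_left (measure_ne_top ρ _)] at this

lemma isOpen_Omega (ε : ℝ) : IsOpen {z : ℂ | z.im ≠ 0 ∨ z.re < ε} := by
  have h1 : IsOpen {z : ℂ | z.im ≠ 0} :=
    isOpen_ne_fun Complex.continuous_im continuous_const
  have h2 : IsOpen {z : ℂ | z.re < ε} :=
    isOpen_lt Complex.continuous_re continuous_const
  exact h1.union h2

lemma ball_lb (ε : ℝ) {z₀ : ℂ} (hz₀ : z₀ ∈ {z : ℂ | z.im ≠ 0 ∨ z.re < ε}) :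
    ∃ r : ℝ, 0 < r ∧ ∀ z ∈ Metric.ball z₀ r, ∀ t : ℝ, ε ≤ t →
      r ≤ ‖(t : ℂ) - z‖ := by
  obtain ⟨r, hr, hball⟩ := Metric.isOpen_iff.1 (isOpen_Omega ε) z₀ hz₀
  refine ⟨r / 2, by linarith, fun z hz t ht => ?_⟩
  by_contra hlt
  push_neg at hlt
  have htmem : (t : ℂ) ∈ Metric.ball z₀ r := by
    rw [Metric.mem_ball] at hz ⊢
    calc dist (t : ℂ) z₀ ≤ dist (t : ℂ) z + dist z z₀ := dist_triangle _ _ _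
      _ < r / 2 + r / 2 := by
          rw [Complex.dist_eq]
          exact add_lt_add hlt hz
      _ = r := by ring
  have := hball htmem
  simp only [Set.mem_setOf_eq, Complex.ofReal_im, Complex.ofReal_re] at this
  rcases this with h | h
  · exact h rfl
  · linarith

lemma preconn (ε : ℝ) : IsPreconnected {z : ℂ | z.im ≠ 0 ∨ z.re < ε} := by
  have hset : {z : ℂ | z.im ≠ 0 ∨ z.re < ε} =
      ({z : ℂ | z.re < ε} ∪ {z : ℂ | 0 < z.im}) ∪ {z : ℂ | z.im < 0} := by
    ext z
    simp only [Set.mem_setOf_eq, Set.mem_union, ne_eq]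
    constructor
    · rintro (h | h)
      · rcases lt_or_gt_of_ne h with h' | h'
        · exact Or.inr h'
        · exact Or.inl (Or.inr h')
      · exact Or.inl (Or.inl h)
    · rintro ((h | h) | h)
      · exact Or.inr h
      · exact Or.inl (ne_of_gt h)
      · exact Or.inl (ne_of_lt h)
  rw [hset]
  have hA : IsPreconnected ({z : ℂ | z.re < ε} ∪ {z : ℂ | 0 < z.im}) := by
    refine IsPreconnected.union ((ε - 1 : ℝ) + I) ?_ ?_
      (convex_halfSpace_re_lt ε).isPreconnected (convex_halfSpace_im_gt 0).isPreconnected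
    · simp
    · simp
  refine IsPreconnected.union ((ε - 1 : ℝ) - I) (Or.inl ?_) ?_ hA
    (convex_halfSpace_im_lt 0).isPreconnected
  · simp
  · simp [Set.mem_setOf_eq]

lemma G_hasDeriv (ε : ℝ) (hε : 0 < ε) (ρ : Measure ℝ) [IsFiniteMeasure ρ]
    (hae : ∀ᵐ t ∂ρ, ε ≤ t) {z₀ : ℂ} (hz₀ : z₀ ∈ {z : ℂ | z.im ≠ 0 ∨ z.re < ε}) :
    DifferentiableAt ℂ (fun z => ∫ t : ℝ, F z t ∂ρ) z₀ := by
  obtain ⟨r, hr, hlb⟩ := ball_lb ε hz₀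
  set R : ℝ := ‖z₀‖ + r with hR
  have hR0 : 0 ≤ R := by positivity
  set M : ℝ := ((r + R) ^ 2 + 1) / r ^ 2 with hM
  have key := hasDerivAt_integral_of_dominated_loc_of_deriv_le (μ := ρ) (x₀ := z₀)
    (F := fun z t => F z t) (F' := fun z t => ((t : ℂ) ^ 2 + 1) / ((t : ℂ) - z) ^ 2)
    (bound := fun _ => M) (Metric.ball_mem_nhds z₀ hr)
    (Filter.Eventually.of_forall fun z => (F_meas z).aestronglyMeasurable)
    (integrable_F hr (hae.mono fun t ht => hlb z₀ (Metric.mem_ball_self hr) t ht))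
    (((((Complex.measurable_ofReal.pow_const 2).add measurable_const).div
      ((Complex.measurable_ofReal.sub measurable_const).pow_const 2))).aestronglyMeasurable)
    ?_ (integrable_const M) ?_
  · exact HasDerivAt.differentiableAt key.2
  · -- bound
    refine hae.mono fun t ht z hz => ?_
    have habs : r ≤ ‖(t : ℂ) - z‖ := hlb z hz t ht
    have hzR : ‖z‖ ≤ R := by
      rw [Metric.mem_ball, Complex.dist_eq] at hz
      calc ‖z‖ = ‖z₀ + (z - z₀)‖ := by ring_nf
        _ ≤ ‖z₀‖ + ‖z - z₀‖ := norm_add_le _ _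
        _ ≤ ‖z₀‖ + r := by
            linarith [hz]
    have ht0 : 0 < t := lt_of_lt_of_le hε ht
    set A : ℝ := ‖(t : ℂ) - z‖ with hA
    have hA0 : 0 < A := lt_of_lt_of_le hr habs
    have ha : t ≤ A + ‖z‖ := by
      calc t = ‖(t : ℂ)‖ := by
            rw [Complex.norm_real, Real.norm_eq_abs, abs_of_pos ht0]
        _ = ‖((t : ℂ) - z) + z‖ := by ring_nf
        _ ≤ _ := norm_add_le _ _
    have h1 : t * r ≤ A * (r + R) := by
      nlinarith [mul_le_mul_of_nonneg_right (show t ≤ A + R by linarith) hr.le,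
        mul_le_mul_of_nonneg_left habs hR0]
    have h3 : t ^ 2 * r ^ 2 ≤ A ^ 2 * (r + R) ^ 2 := by
      have := pow_le_pow_left₀ (by positivity) h1 2
      nlinarith [this]
    have hnorm : ‖((t : ℂ) ^ 2 + 1) / ((t : ℂ) - z) ^ 2‖
        = (t ^ 2 + 1) / A ^ 2 := by
      rw [norm_div, norm_pow]
      congr 1
      have : ((t : ℂ) ^ 2 + 1) = ((t ^ 2 + 1 : ℝ) : ℂ) := by push_cast; ring
      rw [this, Complex.norm_real, Real.norm_eq_abs, abs_of_pos (by positivity)]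
    have h2 : r ^ 2 ≤ A ^ 2 := by nlinarith
    rw [hnorm, div_le_iff₀ (by positivity), hM, div_mul_eq_mul_div,
      le_div_iff₀ (by positivity)]
    nlinarith [h3, h2]
  · -- differentiability
    refine hae.mono fun t ht z hz => ?_
    have habs : r ≤ ‖(t : ℂ) - z‖ := hlb z hz t ht
    have hne : (t : ℂ) - z ≠ 0 := by
      intro h0; rw [h0] at habs; simp at habs; linarith
    have hu : HasDerivAt (fun w : ℂ => 1 + w * (t : ℂ)) (t : ℂ) z := by
      simpa using ((hasDerivAt_id z).mul_const (t : ℂ)).const_add 1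
    have hv : HasDerivAt (fun w : ℂ => (t : ℂ) - w) (-1) z := by
      simpa using (hasDerivAt_id z).const_sub (t : ℂ)
    have := hu.div hv hne
    refine this.congr_deriv ?_
    rw [div_eq_div_iff (pow_ne_zero 2 hne) (pow_ne_zero 2 hne)]
    ring
lemma ofReal_int (ρ : Measure ℝ) (f : ℝ → ℝ) :
    (∫ t : ℝ, ((f t : ℝ) : ℂ) ∂ρ) = ((∫ t : ℝ, f t ∂ρ : ℝ) : ℂ) :=
  integral_ofReal

lemma iio_null (ε : ℝ) (B : ℂ → ℂ)
    (hB : AnalyticOnNhd ℂ B {z : ℂ | z.im ≠ 0 ∨ z.re < ε})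
    (hreal : ∀ x : ℝ, x < ε → (B (x : ℂ)).im = 0)
    (β γ : ℝ) (hγ : 0 ≤ γ) (ρ : Measure ℝ) [IsFiniteMeasure ρ]
    (hrep : ∀ z : ℂ, 0 < z.im → B z = (β : ℂ) + (γ : ℂ) * z + ∫ t : ℝ, F z t ∂ρ) :
    ρ (Set.Iio ε) = 0 := by
  have hcov : Set.Iio ε ⊆ ⋃ n : ℕ, Set.Icc (ε - 2 - n) (ε - 1 / (n + 1)) := by
    intro t ht
    rw [Set.mem_Iio] at ht
    have hεt : 0 < ε - t := by linarith
    obtain ⟨n, hn⟩ := exists_nat_gt (max (ε - t - 2) (1 / (ε - t)))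
    refine Set.mem_iUnion.2 ⟨n, ?_, ?_⟩
    · have := (le_max_left (ε - t - 2) (1 / (ε - t))).trans hn.le
      linarith
    · have h1 : 1 / (ε - t) < (n : ℝ) + 1 := by
        linarith [lt_of_le_of_lt (le_max_right (ε - t - 2) (1 / (ε - t))) hn]
      have h2 : 1 < ((n : ℝ) + 1) * (ε - t) := (div_lt_iff₀ hεt).mp h1
      have h3 : 1 / ((n : ℝ) + 1) < ε - t := by
        rw [div_lt_iff₀ (by positivity)]
        nlinarith
      linarith
  refine measure_mono_null hcov (measure_iUnion_null fun n => ?_)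
  refine icc_null ε B hB hreal β γ hγ ρ hrep _ _ ?_ ?_
  · have h1 : 1 / ((n : ℝ) + 1) ≤ 1 := by
      rw [div_le_one (by positivity)]
      linarith [Nat.cast_nonneg (α := ℝ) n]
    have : (0:ℝ) ≤ n := Nat.cast_nonneg n
    linarith
  · have : (0:ℝ) < 1 / ((n : ℝ) + 1) := by positivity
    linarith

end Stmt15

open Stmt15

/-- Nevanlinna analysis in the proof of Theorem 3.6: if `B` is a Pick function,
analytic across `ℂ ∖ [ε,∞)`, real on `(-∞, ε)`, with `B(0) = 0` and Nevanlinna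
representation `B(z) = β + γz + ∫ (1+zt)/(t-z) dρ(t)`, then `ρ` is supported in
`[ε,∞)`, `β = -∫ (1/t) dρ(t)`, `C(z) = zB(z)` equals
`z²(γ + ∫ (t²+1)/(t(t-z)) dρ(t))`, and `C(z)/z²` has nonnegative imaginary
part on `ℂ⁺` and nonnegative real part on the left half-plane. -/
theorem stmt15 (ε : ℝ) (hε : 0 < ε) (B : ℂ → ℂ)
    (hB : AnalyticOnNhd ℂ B {z : ℂ | z.im ≠ 0 ∨ z.re < ε})
    (hPick : ∀ z : ℂ, 0 < z.im → 0 ≤ (B z).im)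
    (hreal : ∀ x : ℝ, x < ε → (B (x : ℂ)).im = 0)
    (hB0 : B 0 = 0)
    (β γ : ℝ) (hγ : 0 ≤ γ) (ρ : Measure ℝ) [IsFiniteMeasure ρ]
    (hrep : ∀ z : ℂ, 0 < z.im →
      B z = (β : ℂ) + (γ : ℂ) * z + ∫ t : ℝ, (1 + z * (t : ℂ)) / ((t : ℂ) - z) ∂ρ) :
    ρ (Set.Iio ε) = 0 ∧
      Integrable (fun t : ℝ => 1 / t) ρ ∧
      β = -∫ t : ℝ, 1 / t ∂ρ ∧
      (∀ z : ℂ, z.im ≠ 0 ∨ z.re < 0 →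
        z * B z = z ^ 2 * ((γ : ℂ) +
          ∫ t : ℝ, ((t : ℂ) ^ 2 + 1) / ((t : ℂ) * ((t : ℂ) - z)) ∂ρ)) ∧
      (∀ z : ℂ, 0 < z.im → 0 ≤ ((z * B z) / z ^ 2).im) ∧
      (∀ z : ℂ, z.re < 0 → 0 ≤ ((z * B z) / z ^ 2).re) := by
  have hrep' : ∀ z : ℂ, 0 < z.im →
      B z = (β : ℂ) + (γ : ℂ) * z + ∫ t : ℝ, F z t ∂ρ := hrep
  -- (1) support
  have hsupp : ρ (Set.Iio ε) = 0 := iio_null ε B hB hreal β γ hγ ρ hrep'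
  have hae : ∀ᵐ t ∂ρ, ε ≤ t := by
    rw [ae_iff]
    have hset : {a : ℝ | ¬ ε ≤ a} = Set.Iio ε := by ext t; simp [not_le]
    rw [hset]; exact hsupp
  -- B agrees with the Nevanlinna transform everywhere on Ω
  set Ω : Set ℂ := {z : ℂ | z.im ≠ 0 ∨ z.re < ε} with hΩdef
  set G : ℂ → ℂ := fun z => (β : ℂ) + (γ : ℂ) * z + ∫ t : ℝ, F z t ∂ρ with hGdef
  have hGan : AnalyticOnNhd ℂ G Ω := by
    refine DifferentiableOn.analyticOnNhd (fun z hz => ?_) (isOpen_Omega ε)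
    refine DifferentiableAt.differentiableWithinAt ?_
    exact ((differentiableAt_const _).add ((differentiableAt_const _).mul
      differentiableAt_id)).add (G_hasDeriv ε hε ρ hae hz)
  have heq : Set.EqOn B G Ω := by
    refine AnalyticOnNhd.eqOn_of_preconnected_of_eventuallyEq hB hGan (preconn ε)
      (z₀ := I) (Or.inl (by simp)) ?_
    have hmem : {z : ℂ | 0 < z.im} ∈ nhds I :=
      (isOpen_lt continuous_const Complex.continuous_im).mem_nhds (by simp)
    exact Filter.eventuallyEq_of_mem hmem fun z hz => hrep' z hz
  -- (2) integrability of 1/t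
  have h1t : Integrable (fun t : ℝ => 1 / t) ρ := by
    refine Integrable.mono' (integrable_const (1 / ε))
      (measurable_const.div measurable_id).aestronglyMeasurable ?_
    refine hae.mono fun t ht => ?_
    have ht0 : 0 < t := lt_of_lt_of_le hε ht
    rw [Real.norm_eq_abs, abs_of_pos (by positivity)]
    exact one_div_le_one_div_of_le hε ht
  -- (3) beta
  have hG0 : G 0 = 0 := by rw [← heq (Or.inr (by simpa using hε)), hB0]
  have hF0 : ∀ t : ℝ, F 0 t = ((1 / t : ℝ) : ℂ) := by
    intro t
    simp [F]
  have hβ : β = -∫ t : ℝ, 1 / t ∂ρ := by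
    have h1 : (β : ℂ) + ((∫ t : ℝ, 1 / t ∂ρ : ℝ) : ℂ) = 0 := by
      have := hG0
      rw [hGdef] at this
      simp only [mul_zero, add_zero] at this
      rw [show (∫ t : ℝ, F 0 t ∂ρ) = ((∫ t : ℝ, 1 / t ∂ρ : ℝ) : ℂ) by
        rw [← ofReal_int ρ (fun t => 1 / t)]
        exact integral_congr_ae (ae_of_all _ fun t => hF0 t)] at this
      simpa using this
    have h2 : ((β + ∫ t : ℝ, 1 / t ∂ρ : ℝ) : ℂ) = 0 := by push_cast; linear_combination h1
    have h3 : β + ∫ t : ℝ, 1 / t ∂ρ = 0 := by exact_mod_cast h2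
    linarith
  refine ⟨hsupp, h1t, hβ, ?_⟩
  -- (4) the identity
  have hmain : ∀ z : ℂ, z.im ≠ 0 ∨ z.re < 0 →
      z * B z = z ^ 2 * ((γ : ℂ) +
        ∫ t : ℝ, ((t : ℂ) ^ 2 + 1) / ((t : ℂ) * ((t : ℂ) - z)) ∂ρ) := by
    intro z hz
    have hzΩ : z ∈ Ω := by
      rcases hz with h | h
      · exact Or.inl h
      · exact Or.inr (h.trans hε)
    obtain ⟨d, hd, hdist'⟩ := ball_lb ε hzΩ
    have hdist : ∀ᵐ t ∂ρ, d ≤ ‖Complex.ofReal t - z‖ :=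
      hae.mono fun t ht => hdist' z (Metric.mem_ball_self hd) t ht
    have hFint : Integrable (F z) ρ := integrable_F hd hdist
    have hinv : Integrable (fun t : ℝ => z * ((1 / t : ℝ) : ℂ)) ρ :=
      (h1t.ofReal (𝕜 := ℂ)).const_mul z
    have hBz : B z = (β : ℂ) + (γ : ℂ) * z + ∫ t : ℝ, F z t ∂ρ := heq hzΩ
    have hkey : ∀ᵐ t ∂ρ, z * F z t - z * ((1 / t : ℝ) : ℂ)
        = z ^ 2 * (((t : ℂ) ^ 2 + 1) / ((t : ℂ) * ((t : ℂ) - z))) := by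
      refine (hae.and hdist).mono fun t ⟨ht, htd⟩ => ?_
      have ht0 : (t : ℂ) ≠ 0 := by
        simpa using ne_of_gt (lt_of_lt_of_le hε ht)
      have htz : (t : ℂ) - z ≠ 0 := by
        intro h0; rw [h0] at htd; simp at htd; linarith
      rw [F]
      push_cast
      field_simp
      ring
    have hstep : z * (∫ t : ℝ, F z t ∂ρ) - z * ((∫ t : ℝ, 1 / t ∂ρ : ℝ) : ℂ)
        = z ^ 2 * ∫ t : ℝ, ((t : ℂ) ^ 2 + 1) / ((t : ℂ) * ((t : ℂ) - z)) ∂ρ := by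
      have e1 : z * (∫ t : ℝ, F z t ∂ρ) = ∫ t : ℝ, z * F z t ∂ρ :=
        (integral_const_mul z _).symm
      have e2 : z * ((∫ t : ℝ, 1 / t ∂ρ : ℝ) : ℂ) = ∫ t : ℝ, z * ((1 / t : ℝ) : ℂ) ∂ρ := by
        rw [← ofReal_int ρ (fun t => 1 / t), ← integral_const_mul]
      rw [e1, e2, ← integral_sub (hFint.const_mul z) hinv]
      rw [integral_congr_ae hkey]
      exact integral_const_mul _ _
    rw [hBz, hβ]
    push_cast
    linear_combination hstep
  -- integrability of the new integrand
  have hHint : ∀ z : ℂ, z ∈ Ω → Integrable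
      (fun t : ℝ => ((t : ℂ) ^ 2 + 1) / ((t : ℂ) * ((t : ℂ) - z))) ρ := by
    intro z hzΩ
    obtain ⟨d, hd, hdist'⟩ := ball_lb ε hzΩ
    set Z : ℝ := ‖z‖ with hZ
    have hZnn : 0 ≤ Z := norm_nonneg z
    refine Integrable.mono' (integrable_const ((ε*d + ε*Z + 1) / (ε*d)))
      (((((Complex.measurable_ofReal.pow_const 2).add measurable_const)).div
        (Complex.measurable_ofReal.mul
          (Complex.measurable_ofReal.sub measurable_const))).aestronglyMeasurable) ?_
    refine hae.mono fun t ht => ?_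
    have ht0 : (0:ℝ) < t := lt_of_lt_of_le hε ht
    have habs : d ≤ ‖(t : ℂ) - z‖ :=
      hdist' z (Metric.mem_ball_self hd) t ht
    set A : ℝ := ‖(t : ℂ) - z‖ with hA
    have hA0 : 0 < A := lt_of_lt_of_le hd habs
    have hnorm : ‖((t : ℂ) ^ 2 + 1) / ((t : ℂ) * ((t : ℂ) - z))‖
        = (t ^ 2 + 1) / (t * A) := by
      rw [norm_div, norm_mul]
      congr 1
      · have : ((t : ℂ) ^ 2 + 1) = ((t ^ 2 + 1 : ℝ) : ℂ) := by push_cast; ring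
        rw [this, Complex.norm_real, Real.norm_eq_abs, abs_of_pos (by positivity)]
      · rw [Complex.norm_real, Real.norm_eq_abs, abs_of_pos ht0]
    rw [hnorm]
    have h5 : t ≤ A + Z := by
      calc t = ‖(t : ℂ)‖ := by rw [Complex.norm_real, Real.norm_eq_abs, abs_of_pos ht0]
        _ = ‖((t : ℂ) - z) + z‖ := by ring_nf
        _ ≤ A + Z := norm_add_le _ _
    have k1 : t * t ≤ t * A + t * Z := by nlinarith
    have k2 : t * Z * d ≤ t * Z * A := by
      apply mul_le_mul_of_nonneg_left habs (by positivity)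
    have k3 : ε * d ≤ t * A := mul_le_mul ht habs hd.le ht0.le
    rw [div_le_div_iff₀ (by positivity) (by positivity)]
    nlinarith [mul_le_mul_of_nonneg_left k1 (by positivity : (0:ℝ) ≤ ε * d),
      mul_le_mul_of_nonneg_left k2 hε.le]
  have hHsplit : ∀ z : ℂ, ∀ t : ℝ, 0 < t →
      ((t : ℂ) ^ 2 + 1) / ((t : ℂ) * ((t : ℂ) - z))
        = (((t ^ 2 + 1) / t : ℝ) : ℂ) / ((t : ℂ) - z) := by
    intro z t ht0
    rw [Complex.ofReal_div, div_div]
    push_cast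
    ring_nf
  refine ⟨hmain, ?_, ?_⟩
  · -- (5) imaginary part on upper half plane
    intro z hz
    have hz0 : z ≠ 0 := by intro h; rw [h] at hz; simp at hz
    have hzΩ : z ∈ Ω := Or.inl (ne_of_gt hz)
    rw [hmain z (Or.inl (ne_of_gt hz)), mul_div_cancel_left₀ _ (pow_ne_zero 2 hz0),
      Complex.add_im, Complex.ofReal_im]
    have hint := hHint z hzΩ
    have him : (∫ t : ℝ, ((t : ℂ) ^ 2 + 1) / ((t : ℂ) * ((t : ℂ) - z)) ∂ρ).im
        = ∫ t : ℝ, (((t : ℂ) ^ 2 + 1) / ((t : ℂ) * ((t : ℂ) - z))).im ∂ρ := by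
      simpa using (integral_im hint).symm
    rw [zero_add, him]
    refine integral_nonneg_of_ae (hae.mono fun t ht => ?_)
    have ht0 : (0:ℝ) < t := lt_of_lt_of_le hε ht
    show (0:ℝ) ≤ (((t : ℂ) ^ 2 + 1) / ((t : ℂ) * ((t : ℂ) - z))).im
    rw [hHsplit z t ht0, div_eq_mul_inv, Complex.mul_im, Complex.ofReal_re,
      Complex.ofReal_im, zero_mul, add_zero, Complex.inv_im, Complex.sub_im,
      Complex.ofReal_im]
    apply mul_nonneg (by positivity)
    apply div_nonneg _ (Complex.normSq_nonneg _)
    simp only [zero_sub, neg_neg]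
    exact hz.le
  · -- (6) real part on left half plane
    intro z hz
    have hz0 : z ≠ 0 := by intro h; rw [h] at hz; simp at hz
    have hzΩ : z ∈ Ω := Or.inr (hz.trans hε)
    rw [hmain z (Or.inr hz), mul_div_cancel_left₀ _ (pow_ne_zero 2 hz0),
      Complex.add_re, Complex.ofReal_re]
    have hint := hHint z hzΩ
    have hre : (∫ t : ℝ, ((t : ℂ) ^ 2 + 1) / ((t : ℂ) * ((t : ℂ) - z)) ∂ρ).re
        = ∫ t : ℝ, (((t : ℂ) ^ 2 + 1) / ((t : ℂ) * ((t : ℂ) - z))).re ∂ρ := by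
      simpa using (integral_re hint).symm
    rw [hre]
    refine add_nonneg hγ (integral_nonneg_of_ae (hae.mono fun t ht => ?_))
    have ht0 : (0:ℝ) < t := lt_of_lt_of_le hε ht
    show (0:ℝ) ≤ (((t : ℂ) ^ 2 + 1) / ((t : ℂ) * ((t : ℂ) - z))).re
    rw [hHsplit z t ht0, div_eq_mul_inv, Complex.mul_re, Complex.ofReal_re,
      Complex.ofReal_im, zero_mul, sub_zero, Complex.inv_re, Complex.sub_re,
      Complex.ofReal_re]
    apply mul_nonneg (by positivity)
    apply div_nonneg _ (Complex.normSq_nonneg _)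
    linarith
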